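/- For any guessing function G on a finite set 𝒳 (an injection from 𝒳 into the positive integers) and any ρ ≥ 0, E[G(X)^ρ] ≥ (1 + log|𝒳|)^{-ρ} (∑_{x ∈ 𝒳} P(x)^{1/(1+ρ)})^{1+ρ}. -/

import Mathlib

open Finset Real

lemma sum_inv_le_harmonic (S : Finset ℕ) (hS : 0 ∉ S) :
    ∑ k ∈ S, (k : ℝ)⁻¹ ≤ (harmonic S.card : ℝ) := by
  induction S using Finset.induction_on_max with
  | empty => simp
  | insert a s ha ih =>
    have ha0 : a ≠ 0 := by rintro rfl; exact hS (Finset.mem_insert_self 0 s)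
    have h0s : 0 ∉ s := fun h => hS (Finset.mem_insert_of_mem h)
    have has : a ∉ s := fun h => lt_irrefl a (ha a h)
    have hsub : s ⊆ Finset.Ico 1 a := by
      intro x hx
      exact Finset.mem_Ico.mpr ⟨Nat.one_le_iff_ne_zero.mpr (fun h => h0s (h ▸ hx)), ha x hx⟩
    have hcard : s.card + 1 ≤ a := by
      have h := Finset.card_le_card hsub
      rw [Nat.card_Ico] at h
      omega
    rw [Finset.sum_insert has, Finset.card_insert_of_notMem has]
    have h1 : (a : ℝ)⁻¹ ≤ ((s.card + 1 : ℕ) : ℝ)⁻¹ := by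
      apply inv_anti₀ (by positivity)
      exact_mod_cast hcard
    calc (a : ℝ)⁻¹ + ∑ k ∈ s, (k : ℝ)⁻¹
        ≤ ((s.card + 1 : ℕ) : ℝ)⁻¹ + (harmonic s.card : ℝ) :=
          add_le_add h1 (ih h0s)
      _ = (harmonic (s.card + 1) : ℝ) := by
          rw [harmonic_succ]; push_cast; ring

/-- Arikan's lower bound: for any guessing function `G` on a finite set `𝒳` (an injection
into the positive integers) and any `ρ ≥ 0`, with `X ~ P`,
`E[G(X)^ρ] ≥ (1 + log|𝒳|)^{-ρ} (∑_x P(x)^{1/(1+ρ)})^{1+ρ}`. -/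
theorem stmt_9 {𝒳 : Type*} [Fintype 𝒳]
    (P : 𝒳 → ℝ) (hP0 : ∀ x, 0 ≤ P x) (hP1 : ∑ x, P x = 1)
    (G : 𝒳 → ℕ) (hGinj : Function.Injective G) (hGpos : ∀ x, 1 ≤ G x)
    (ρ : ℝ) (hρ : 0 ≤ ρ) :
    (1 + Real.log (Fintype.card 𝒳)) ^ (-ρ) * (∑ x, P x ^ (1 / (1 + ρ))) ^ (1 + ρ)
      ≤ ∑ x, P x * (G x : ℝ) ^ ρ := by
  classical
  set N := Fintype.card 𝒳 with hN
  have hNpos : 0 < N := by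
    rcases Nat.eq_zero_or_pos N with h | h
    · exfalso
      have : IsEmpty 𝒳 := Fintype.card_eq_zero_iff.mp h
      simp [Finset.univ_eq_empty] at hP1
    · exact h
  have hlogN : (0:ℝ) ≤ Real.log N := Real.log_natCast_nonneg N
  have hc : (0:ℝ) < 1 + Real.log N := by linarith
  have hGx0 : ∀ x, (0:ℝ) < (G x : ℝ) := fun x => by
    have := hGpos x; exact_mod_cast Nat.lt_of_lt_of_le Nat.zero_lt_one this
  have hharm : ∑ x : 𝒳, ((G x : ℝ))⁻¹ ≤ 1 + Real.log N := by
    have himg : ∑ k ∈ Finset.image G Finset.univ, (k : ℝ)⁻¹ = ∑ x : 𝒳, ((G x : ℝ))⁻¹ :=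
      Finset.sum_image (fun a _ b _ h => hGinj h)
    have h0 : (0:ℕ) ∉ Finset.image G Finset.univ := by
      simp only [Finset.mem_image, not_exists]
      intro x h
      have := hGpos x
      omega
    have hcard : (Finset.image G Finset.univ).card = N := by
      rw [Finset.card_image_of_injective _ hGinj, Finset.card_univ]
    calc ∑ x : 𝒳, ((G x : ℝ))⁻¹ = ∑ k ∈ Finset.image G Finset.univ, (k : ℝ)⁻¹ := himg.symm
      _ ≤ (harmonic (Finset.image G Finset.univ).card : ℝ) := sum_inv_le_harmonic _ h0
      _ = (harmonic N : ℝ) := by rw [hcard]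
      _ ≤ 1 + Real.log N := harmonic_le_one_add_log N
  rcases eq_or_lt_of_le hρ with hρ0 | hρpos
  · -- ρ = 0
    subst hρ0
    simp only [neg_zero, Real.rpow_zero, one_mul, zero_add, div_one, Real.rpow_one]
    norm_num [Real.rpow_one, hP1]
  · -- ρ > 0 : Hölder
    have hp : (0:ℝ) < 1 + ρ := by linarith
    have hpq : Real.HolderConjugate (1 + ρ) ((1 + ρ) / ρ) := by
      refine Real.holderConjugate_iff.mpr ⟨?_, ?_⟩
      · linarith
      · field_simp
    set B : ℝ := ∑ x, P x * (G x : ℝ) ^ ρ with hB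
    set H : ℝ := ∑ x : 𝒳, ((G x : ℝ))⁻¹ with hH
    have hBnn : 0 ≤ B := Finset.sum_nonneg fun x _ =>
      mul_nonneg (hP0 x) (Real.rpow_nonneg (hGx0 x).le ρ)
    have hHnn : 0 ≤ H := Finset.sum_nonneg fun x _ => (inv_nonneg).mpr (hGx0 x).le
    set f : 𝒳 → ℝ := fun x => (P x * (G x : ℝ) ^ ρ) ^ (1 / (1 + ρ)) with hf
    set g : 𝒳 → ℝ := fun x => ((G x : ℝ))⁻¹ ^ (ρ / (1 + ρ)) with hg
    have key : ∑ x, P x ^ (1 / (1 + ρ)) ≤ B ^ (1 / (1 + ρ)) * H ^ (ρ / (1 + ρ)) := by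
      have hfg : ∀ x, P x ^ (1 / (1 + ρ)) = f x * g x := by
        intro x
        have hGp := hGx0 x
        simp only [hf, hg]
        rw [Real.mul_rpow (hP0 x) (Real.rpow_nonneg hGp.le ρ),
          ← Real.rpow_mul hGp.le, Real.inv_rpow hGp.le,
          mul_one_div, mul_assoc, mul_inv_cancel₀ (Real.rpow_pos_of_pos hGp _).ne', mul_one]
      have hfq : ∀ x, f x ^ (1 + ρ) = P x * (G x : ℝ) ^ ρ := by
        intro x
        simp only [hf]
        rw [← Real.rpow_mul (mul_nonneg (hP0 x) (Real.rpow_nonneg (hGx0 x).le ρ)),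
          one_div, inv_mul_cancel₀ hp.ne', Real.rpow_one]
      have hgq : ∀ x, g x ^ ((1 + ρ) / ρ) = ((G x : ℝ))⁻¹ := by
        intro x
        simp only [hg]
        rw [← Real.rpow_mul (inv_nonneg.mpr (hGx0 x).le)]
        rw [div_mul_div_comm, mul_comm ρ (1+ρ), div_self (by positivity), Real.rpow_one]
      calc ∑ x, P x ^ (1 / (1 + ρ)) = ∑ x, f x * g x := by simp_rw [hfg]
        _ ≤ (∑ x, f x ^ (1 + ρ)) ^ (1 / (1 + ρ)) * (∑ x, g x ^ ((1 + ρ) / ρ)) ^ (1 / ((1 + ρ) / ρ)) :=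
            Real.inner_le_Lp_mul_Lq_of_nonneg Finset.univ hpq
              (fun i _ => Real.rpow_nonneg (mul_nonneg (hP0 i) (Real.rpow_nonneg (hGx0 i).le ρ)) _)
              (fun i _ => Real.rpow_nonneg (inv_nonneg.mpr (hGx0 i).le) _)
        _ = B ^ (1 / (1 + ρ)) * H ^ (ρ / (1 + ρ)) := by
            simp_rw [hfq, hgq]
            rw [one_div_div]
    -- raise to the power (1+ρ)
    have hA : 0 ≤ ∑ x, P x ^ (1 / (1 + ρ)) :=
      Finset.sum_nonneg fun x _ => Real.rpow_nonneg (hP0 x) _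
    have key2 : (∑ x, P x ^ (1 / (1 + ρ))) ^ (1 + ρ) ≤ B * H ^ ρ := by
      calc (∑ x, P x ^ (1 / (1 + ρ))) ^ (1 + ρ)
          ≤ (B ^ (1 / (1 + ρ)) * H ^ (ρ / (1 + ρ))) ^ (1 + ρ) :=
            Real.rpow_le_rpow hA key hp.le
        _ = B * H ^ ρ := by
            rw [Real.mul_rpow (Real.rpow_nonneg hBnn _) (Real.rpow_nonneg hHnn _),
              ← Real.rpow_mul hBnn, ← Real.rpow_mul hHnn, one_div,
              inv_mul_cancel₀ hp.ne', Real.rpow_one, div_mul_cancel₀ _ hp.ne']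
    have hHle : H ^ ρ ≤ (1 + Real.log N) ^ ρ := Real.rpow_le_rpow hHnn hharm hρ
    rw [Real.rpow_neg hc.le, inv_mul_le_iff₀ (Real.rpow_pos_of_pos hc ρ)]
    calc (∑ x, P x ^ (1 / (1 + ρ))) ^ (1 + ρ) ≤ B * H ^ ρ := key2
      _ ≤ B * (1 + Real.log N) ^ ρ := mul_le_mul_of_nonneg_left hHle hBnn
      _ = (1 + Real.log N) ^ ρ * B := mul_comm _ _
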